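/- Let α > 0, β > π/α, and suppose ḡ is a symmetric bilinear form field on ℝ² with -ḡ(Z, Z) ≥ β² for both null directions Z = ∂_t ± ∂_ω of 𝔤 = -dt² + dω². Then the function η(t, ω) = sin(π(t-ω+α)/(2α)) sin(π(t+ω+α)/(2α)) satisfies the generalized null convexity criterion on the causal diamond D_α = {-α < t ± ω < α}: namely (𝔇²η - η ḡ)(Z, Z) ≥ (β² - (π/α)²) η > 0 holds pointwise in D_α for null Z normalized as above, η > 0 in D_α and η = 0 on ∂D_α. -/

import Mathlib

open Real Set

/-- `η(t,ω) = sin(π(t-ω+α)/(2α)) · sin(π(t+ω+α)/(2α))` on the causal diamond. -/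
noncomputable def diamondEta (α t ω : ℝ) : ℝ :=
  Real.sin (π * (t - ω + α) / (2 * α)) * Real.sin (π * (t + ω + α) / (2 * α))

lemma diamondEta_eq (α : ℝ) (hα : α ≠ 0) (t ω : ℝ) :
    diamondEta α t ω = (Real.cos (π * ω / α) - Real.cos (π * (t + α) / α)) / 2 := by
  rw [Real.cos_sub_cos]
  have h1 : (π * ω / α + π * (t + α) / α) / 2 = π * (t + ω + α) / (2 * α) := by
    field_simp; ring
  have h2 : (π * ω / α - π * (t + α) / α) / 2 = -(π * (t - ω + α) / (2 * α)) := by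
    field_simp; ring
  rw [h1, h2, Real.sin_neg]
  unfold diamondEta
  ring

lemma hasDerivAt_cosT (α : ℝ) (hα : α ≠ 0) (t : ℝ) :
    HasDerivAt (fun x => Real.cos (π * (x + α) / α)) (-(π / α * Real.sin (π * (t + α) / α))) t := by
  have h : HasDerivAt (fun x : ℝ => π * (x + α) / α) (π / α) t := by
    have := (((hasDerivAt_id t).add_const α).const_mul π).div_const α
    simpa using this
  have := (Real.hasDerivAt_cos (π * (t + α) / α)).comp t h
  refine this.congr_deriv ?_
  ring

lemma hasDerivAt_cosW (α : ℝ) (hα : α ≠ 0) (ω : ℝ) :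
    HasDerivAt (fun x => Real.cos (π * x / α)) (-(π / α * Real.sin (π * ω / α))) ω := by
  have h : HasDerivAt (fun x : ℝ => π * x / α) (π / α) ω := by
    have := ((hasDerivAt_id ω).const_mul π).div_const α
    simpa using this
  have := (Real.hasDerivAt_cos (π * ω / α)).comp ω h
  refine this.congr_deriv ?_
  ring

lemma hasDerivAt_sinT (α : ℝ) (hα : α ≠ 0) (t : ℝ) :
    HasDerivAt (fun x => Real.sin (π * (x + α) / α)) (π / α * Real.cos (π * (t + α) / α)) t := by
  have h : HasDerivAt (fun x : ℝ => π * (x + α) / α) (π / α) t := by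
    have := (((hasDerivAt_id t).add_const α).const_mul π).div_const α
    simpa using this
  have := (Real.hasDerivAt_sin (π * (t + α) / α)).comp t h
  refine this.congr_deriv ?_
  ring

lemma hasDerivAt_sinW (α : ℝ) (hα : α ≠ 0) (ω : ℝ) :
    HasDerivAt (fun x => Real.sin (π * x / α)) (π / α * Real.cos (π * ω / α)) ω := by
  have h : HasDerivAt (fun x : ℝ => π * x / α) (π / α) ω := by
    have := ((hasDerivAt_id ω).const_mul π).div_const α
    simpa using this
  have := (Real.hasDerivAt_sin (π * ω / α)).comp ω h
  refine this.congr_deriv ?_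
  ring

lemma deriv_eta_t (α : ℝ) (hα : α ≠ 0) (t ω : ℝ) :
    deriv (fun t' => diamondEta α t' ω) t = π / α * Real.sin (π * (t + α) / α) / 2 := by
  have heq : (fun t' => diamondEta α t' ω) =
      fun t' => (Real.cos (π * ω / α) - Real.cos (π * (t' + α) / α)) / 2 :=
    funext fun t' => diamondEta_eq α hα t' ω
  rw [heq]
  have h := ((hasDerivAt_const t (Real.cos (π * ω / α))).sub (hasDerivAt_cosT α hα t)).div_const 2
  have := h.deriv
  simp only [Pi.sub_apply] at this; rw [this]; ring

lemma deriv_eta_w (α : ℝ) (hα : α ≠ 0) (t ω : ℝ) :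
    deriv (fun ω' => diamondEta α t ω') ω = -(π / α * Real.sin (π * ω / α)) / 2 := by
  have heq : (fun ω' => diamondEta α t ω') =
      fun ω' => (Real.cos (π * ω' / α) - Real.cos (π * (t + α) / α)) / 2 :=
    funext fun ω' => diamondEta_eq α hα t ω'
  rw [heq]
  have h := ((hasDerivAt_cosW α hα ω).sub (hasDerivAt_const ω (Real.cos (π * (t + α) / α)))).div_const 2
  have := h.deriv
  simp only [Pi.sub_apply] at this; rw [this]; ring

lemma deriv2_eta_t (α : ℝ) (hα : α ≠ 0) (t ω : ℝ) :
    deriv (deriv (fun t' => diamondEta α t' ω)) t = (π / α) ^ 2 * Real.cos (π * (t + α) / α) / 2 := by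
  have heq : deriv (fun t' => diamondEta α t' ω) =
      fun t' => π / α * Real.sin (π * (t' + α) / α) / 2 :=
    funext fun t' => deriv_eta_t α hα t' ω
  rw [heq]
  have h := (((hasDerivAt_sinT α hα t).const_mul (π / α)).div_const 2).deriv
  rw [h]; ring

lemma deriv2_eta_w (α : ℝ) (hα : α ≠ 0) (t ω : ℝ) :
    deriv (deriv (fun ω' => diamondEta α t ω')) ω = -((π / α) ^ 2 * Real.cos (π * ω / α)) / 2 := by
  have heq : deriv (fun ω' => diamondEta α t ω') =
      fun ω' => -(π / α * Real.sin (π * ω' / α)) / 2 :=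
    funext fun ω' => deriv_eta_w α hα t ω'
  rw [heq]
  have h := ((((hasDerivAt_sinW α hα ω).const_mul (π / α)).neg).div_const 2).deriv
  simp only [Pi.neg_apply] at h; rw [h]; ring

lemma deriv_mixed (α : ℝ) (hα : α ≠ 0) (t ω : ℝ) :
    deriv (fun ω' => deriv (fun t' => diamondEta α t' ω') t) ω = 0 := by
  have heq : (fun ω' => deriv (fun t' => diamondEta α t' ω') t) =
      fun _ : ℝ => π / α * Real.sin (π * (t + α) / α) / 2 :=
    funext fun ω' => deriv_eta_t α hα t ω'
  rw [heq, deriv_const]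

/-- Proposition "AdS_2d": if `-ḡ(Z,Z) ≥ β²` on the null directions `Z = ∂_t ± ∂_ω`
of `𝔤 = -dt² + dω²` and `β > π/α`, then `η` witnesses the GNCC on the causal
diamond `D_α`: `(𝔇²η - η ḡ)(Z,Z) ≥ (β² - (π/α)²) η > 0` in `D_α`, with `η > 0`
inside and `η = 0` on the boundary. -/
theorem stmt6 (α β : ℝ) (hα : 0 < α) (hβ : π / α < β)
    (gbar : ℝ × ℝ → ℝ × ℝ → ℝ × ℝ → ℝ)
    (hsym : ∀ x Z W, gbar x Z W = gbar x W Z)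
    (hnull : ∀ x : ℝ × ℝ, ∀ ε : ℝ, ε = 1 ∨ ε = -1 →
      -(gbar x (1, ε) (1, ε)) ≥ β ^ 2) :
    (∀ t ω : ℝ, |t - ω| < α → |t + ω| < α → 0 < diamondEta α t ω) ∧
    (∀ t ω : ℝ, |t - ω| ≤ α → |t + ω| ≤ α → (|t - ω| = α ∨ |t + ω| = α) →
      diamondEta α t ω = 0) ∧
    (∀ t ω : ℝ, |t - ω| < α → |t + ω| < α → ∀ ε : ℝ, ε = 1 ∨ ε = -1 →
      (deriv (deriv (fun t' => diamondEta α t' ω)) t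
          + 2 * ε * deriv (fun ω' => deriv (fun t' => diamondEta α t' ω') t) ω
          + deriv (deriv (fun ω' => diamondEta α t ω')) ω
          - diamondEta α t ω * gbar (t, ω) (1, ε) (1, ε)
        ≥ (β ^ 2 - (π / α) ^ 2) * diamondEta α t ω) ∧
      0 < (β ^ 2 - (π / α) ^ 2) * diamondEta α t ω) := by
  have hα' : α ≠ 0 := ne_of_gt hα
  have hpos : ∀ t ω : ℝ, |t - ω| < α → |t + ω| < α → 0 < diamondEta α t ω := by
    intro t ω h1 h2
    rw [abs_lt] at h1 h2
    unfold diamondEta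
    have s1 : 0 < Real.sin (π * (t - ω + α) / (2 * α)) := by
      apply Real.sin_pos_of_pos_of_lt_pi
      · apply div_pos (by nlinarith [pi_pos]) (by linarith)
      · rw [div_lt_iff₀ (by linarith)]
        nlinarith [pi_pos]
    have s2 : 0 < Real.sin (π * (t + ω + α) / (2 * α)) := by
      apply Real.sin_pos_of_pos_of_lt_pi
      · apply div_pos (by nlinarith [pi_pos]) (by linarith)
      · rw [div_lt_iff₀ (by linarith)]
        nlinarith [pi_pos]
    exact mul_pos s1 s2
  refine ⟨hpos, ?_, ?_⟩
  · intro t ω h1 h2 hbd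
    unfold diamondEta
    rcases hbd with hb | hb
    · rcases abs_eq (le_of_lt hα) |>.mp hb with he | he
      · have : π * (t - ω + α) / (2 * α) = π := by
          rw [he]; rw [show α + α = 2 * α by ring]; field_simp
        rw [this, Real.sin_pi, zero_mul]
      · have : π * (t - ω + α) / (2 * α) = 0 := by
          rw [he]; field_simp; ring
        rw [this, Real.sin_zero, zero_mul]
    · rcases abs_eq (le_of_lt hα) |>.mp hb with he | he
      · have : π * (t + ω + α) / (2 * α) = π := by
          rw [he]; rw [show α + α = 2 * α by ring]; field_simp
        rw [this, Real.sin_pi, mul_zero]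
      · have : π * (t + ω + α) / (2 * α) = 0 := by
          rw [he]; field_simp; ring
        rw [this, Real.sin_zero, mul_zero]
  · intro t ω h1 h2 ε hε
    have hetapos := hpos t ω h1 h2
    have hg := hnull (t, ω) ε hε
    have hπα : 0 < π / α := div_pos pi_pos hα
    have hβ2 : (π / α) ^ 2 < β ^ 2 := by nlinarith
    constructor
    · rw [deriv2_eta_t α hα' t ω, deriv2_eta_w α hα' t ω, deriv_mixed α hα' t ω]
      have hsum : (π / α) ^ 2 * Real.cos (π * (t + α) / α) / 2
          + -((π / α) ^ 2 * Real.cos (π * ω / α)) / 2 = -((π / α) ^ 2) * diamondEta α t ω := by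
        rw [diamondEta_eq α hα' t ω]; ring
      have hmul : diamondEta α t ω * (-(gbar (t, ω) (1, ε) (1, ε))) ≥
          diamondEta α t ω * β ^ 2 :=
        mul_le_mul_of_nonneg_left hg (le_of_lt hetapos)
      nlinarith [hmul, hsum]
    · exact mul_pos (by linarith) hetapos
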